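/- For the path graph P_n on n ≥ 1 vertices, the number of dominating sets of even size minus the number of dominating sets of odd size equals (-1)^{⌈n/2⌉}. -/

import Mathlib

/-- `S` is a dominating set: every vertex is in `S` or adjacent to a member of `S`. -/
def IsDomSet {V : Type*} (G : SimpleGraph V) (S : Finset V) : Prop :=
  ∀ v, v ∈ S ∨ ∃ u ∈ S, G.Adj u v

instance {V : Type*} [Fintype V] [DecidableEq V] (G : SimpleGraph V)
    [DecidableRel G.Adj] : DecidablePred (IsDomSet G) :=
  fun _ => inferInstanceAs (Decidable (∀ _, _ ∨ _))


/-- The path graph on `n` vertices `{1, ..., n}` (vertex `i : Fin n`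
represents `i.val + 1`), with `i` adjacent to `j` iff `|i - j| = 1`. -/
def pathGraph' (n : ℕ) : SimpleGraph (Fin n) where
  Adj i j := ((i.val : ℤ) - j.val).natAbs = 1
  symm := by
    constructor
    intro i j h
    rw [show ((j.val : ℤ) - i.val) = -((i.val : ℤ) - j.val) by ring, Int.natAbs_neg]
    exact h
  loopless := by constructor; intro i h; simp at h

instance (n : ℕ) : DecidableRel (pathGraph' n).Adj :=
  fun i j => decidable_of_iff (((i.val : ℤ) - j.val).natAbs = 1) Iff.rfl

/- ### Auxiliary development: a signed transfer-matrix computation over `ℕ`-subsets -/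

namespace PathDomAux

open Finset

/-- Partial domination: every vertex except possibly the last one is dominated. -/
def pd (n : ℕ) (S : Finset ℕ) : Prop :=
  ∀ v, v + 1 < n → (v ∈ S ∨ v + 1 ∈ S ∨ v - 1 ∈ S)

instance (n : ℕ) (S : Finset ℕ) : Decidable (pd n S) :=
  decidable_of_iff (∀ v < n, v + 1 < n → (v ∈ S ∨ v + 1 ∈ S ∨ v - 1 ∈ S))
    ⟨fun h v hv => h v (by omega) hv, fun h v _ hv => h v hv⟩

/-- Full domination for the path on `{0, …, n-1}`. -/
def domN (n : ℕ) (S : Finset ℕ) : Prop :=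
  ∀ v < n, (v ∈ S ∨ v + 1 ∈ S ∨ v - 1 ∈ S)

instance (n : ℕ) (S : Finset ℕ) : Decidable (domN n S) := by
  unfold domN; infer_instance

def A (n : ℕ) : ℤ :=
  ∑ S ∈ (range n).powerset, if pd n S ∧ n - 1 ∈ S then (-1 : ℤ) ^ S.card else 0
def B (n : ℕ) : ℤ :=
  ∑ S ∈ (range n).powerset, if pd n S ∧ n - 1 ∉ S ∧ n - 2 ∈ S then (-1 : ℤ) ^ S.card else 0
def C (n : ℕ) : ℤ :=
  ∑ S ∈ (range n).powerset, if pd n S ∧ n - 1 ∉ S ∧ n - 2 ∉ S then (-1 : ℤ) ^ S.card else 0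

lemma pd_insert (n : ℕ) (T : Finset ℕ) (_hT : T ⊆ range n) :
    pd (n + 1) (insert n T) ↔ pd n T := by
  constructor
  · intro h v hv
    rcases h v (by omega) with h1 | h2 | h3
    · rcases mem_insert.1 h1 with h | h
      · omega
      · exact Or.inl h
    · rcases mem_insert.1 h2 with h | h
      · omega
      · exact Or.inr (Or.inl h)
    · rcases mem_insert.1 h3 with h | h
      · omega
      · exact Or.inr (Or.inr h)
  · intro h v hv
    by_cases hv' : v + 1 < n
    · rcases h v hv' with h1 | h1 | h1
      · exact Or.inl (mem_insert_of_mem h1)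
      · exact Or.inr (Or.inl (mem_insert_of_mem h1))
      · exact Or.inr (Or.inr (mem_insert_of_mem h1))
    · have : v + 1 = n := by omega
      exact Or.inr (Or.inl (this ▸ mem_insert_self n T))

lemma pd_succ (n : ℕ) (hn : 1 ≤ n) (S : Finset ℕ) (hS : S ⊆ range n) :
    pd (n + 1) S ↔ pd n S ∧ (n - 1 ∈ S ∨ n - 2 ∈ S) := by
  have hnS : n ∉ S := fun h => by simpa using hS h
  constructor
  · intro h
    refine ⟨fun v hv => h v (by omega), ?_⟩
    rcases h (n - 1) (by omega) with h1 | h2 | h3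
    · exact Or.inl h1
    · rw [show n - 1 + 1 = n by omega] at h2; exact absurd h2 hnS
    · exact Or.inr (by rwa [show n - 1 - 1 = n - 2 by omega] at h3)
  · rintro ⟨h, hd⟩ v hv
    by_cases hv' : v + 1 < n
    · exact h v hv'
    · have hveq : v = n - 1 := by omega
      rcases hd with h1 | h1
      · exact Or.inl (hveq ▸ h1)
      · refine Or.inr (Or.inr ?_)
        rwa [hveq, show n - 1 - 1 = n - 2 by omega]

lemma domN_iff (n : ℕ) (hn : 1 ≤ n) (S : Finset ℕ) (hS : S ⊆ range n) :
    domN n S ↔ pd n S ∧ (n - 1 ∈ S ∨ n - 2 ∈ S) := by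
  have hnS : n ∉ S := fun h => by simpa using hS h
  constructor
  · intro h
    refine ⟨fun v hv => h v (by omega), ?_⟩
    rcases h (n - 1) (by omega) with h1 | h2 | h3
    · exact Or.inl h1
    · rw [show n - 1 + 1 = n by omega] at h2; exact absurd h2 hnS
    · exact Or.inr (by rwa [show n - 1 - 1 = n - 2 by omega] at h3)
  · rintro ⟨h, hd⟩ v hv
    by_cases hv' : v + 1 < n
    · exact h v hv'
    · have hveq : v = n - 1 := by omega
      rcases hd with h1 | h1
      · exact Or.inl (hveq ▸ h1)
      · refine Or.inr (Or.inr ?_)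
        rwa [hveq, show n - 1 - 1 = n - 2 by omega]

lemma ABC_total (n : ℕ) :
    A n + B n + C n = ∑ S ∈ (range n).powerset, if pd n S then (-1 : ℤ) ^ S.card else 0 := by
  rw [A, B, C, ← sum_add_distrib, ← sum_add_distrib]
  refine sum_congr rfl fun S _ => ?_
  by_cases h1 : pd n S
  · by_cases h2 : n - 1 ∈ S
    · simp [h1, h2]
    · by_cases h3 : n - 2 ∈ S <;> simp [h1, h2, h3]
  · simp [h1]

lemma A_rec (n : ℕ) (hn : 1 ≤ n) : A (n + 1) = -(A n + B n + C n) := by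
  have hn' : n ∉ range n := by simp
  rw [show A (n + 1) = ∑ S ∈ (range (n+1)).powerset,
      if pd (n+1) S ∧ n ∈ S then (-1 : ℤ) ^ S.card else 0 by rw [A]; norm_num,
    range_add_one, sum_powerset_insert hn']
  have h1 : ∑ S ∈ (range n).powerset,
      (if pd (n+1) S ∧ n ∈ S then (-1 : ℤ) ^ S.card else 0) = 0 := by
    refine sum_eq_zero fun S hS => if_neg ?_
    rintro ⟨-, hmem⟩
    exact hn' (mem_powerset.1 hS hmem)
  have h2 : ∀ S ∈ (range n).powerset,
      (if pd (n+1) (insert n S) ∧ n ∈ insert n S then (-1 : ℤ) ^ (insert n S).card else 0)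
        = -(if pd n S then (-1 : ℤ) ^ S.card else 0) := by
    intro S hS
    have hsub := mem_powerset.1 hS
    have hnS : n ∉ S := fun h => hn' (hsub h)
    have hcard : (insert n S).card = S.card + 1 := card_insert_of_notMem hnS
    have hpd := pd_insert n S hsub
    by_cases h : pd n S
    · rw [if_pos ⟨hpd.2 h, mem_insert_self n S⟩, if_pos h, hcard, pow_succ]; ring
    · rw [if_neg (fun hc => h (hpd.1 hc.1)), if_neg h, neg_zero]
  rw [h1, zero_add, sum_congr rfl h2, sum_neg_distrib, ABC_total]

lemma B_rec (n : ℕ) (hn : 1 ≤ n) : B (n + 1) = A n := by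
  have hn' : n ∉ range n := by simp
  rw [show B (n + 1) = ∑ S ∈ (range (n+1)).powerset,
      if pd (n+1) S ∧ n ∉ S ∧ n - 1 ∈ S then (-1 : ℤ) ^ S.card else 0 by
        rw [B, show n+1-2 = n-1 by omega, show n+1-1 = n by omega],
    range_add_one, sum_powerset_insert hn']
  have h2 : ∑ S ∈ (range n).powerset,
      (if pd (n+1) (insert n S) ∧ n ∉ insert n S ∧ n - 1 ∈ insert n S
        then (-1 : ℤ) ^ (insert n S).card else 0) = 0 := by
    refine sum_eq_zero fun S hS => if_neg ?_
    rintro ⟨-, hmem, -⟩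
    exact hmem (mem_insert_self n S)
  have h1 : ∀ S ∈ (range n).powerset,
      (if pd (n+1) S ∧ n ∉ S ∧ n - 1 ∈ S then (-1 : ℤ) ^ S.card else 0)
        = (if pd n S ∧ n - 1 ∈ S then (-1 : ℤ) ^ S.card else 0) := by
    intro S hS
    have hsub := mem_powerset.1 hS
    have hnS : n ∉ S := fun h => hn' (hsub h)
    have hpd := pd_succ n hn S hsub
    congr 1
    apply propext
    constructor
    · rintro ⟨h, -, h3⟩; exact ⟨(hpd.1 h).1, h3⟩
    · rintro ⟨h, h3⟩; exact ⟨hpd.2 ⟨h, Or.inl h3⟩, hnS, h3⟩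
  rw [h2, add_zero, sum_congr rfl h1, A]

lemma C_rec (n : ℕ) (hn : 1 ≤ n) : C (n + 1) = B n := by
  have hn' : n ∉ range n := by simp
  rw [show C (n + 1) = ∑ S ∈ (range (n+1)).powerset,
      if pd (n+1) S ∧ n ∉ S ∧ n - 1 ∉ S then (-1 : ℤ) ^ S.card else 0 by
        rw [C, show n+1-2 = n-1 by omega, show n+1-1 = n by omega],
    range_add_one, sum_powerset_insert hn']
  have h2 : ∑ S ∈ (range n).powerset,
      (if pd (n+1) (insert n S) ∧ n ∉ insert n S ∧ n - 1 ∉ insert n S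
        then (-1 : ℤ) ^ (insert n S).card else 0) = 0 := by
    refine sum_eq_zero fun S hS => if_neg ?_
    rintro ⟨-, hmem, -⟩
    exact hmem (mem_insert_self n S)
  have h1 : ∀ S ∈ (range n).powerset,
      (if pd (n+1) S ∧ n ∉ S ∧ n - 1 ∉ S then (-1 : ℤ) ^ S.card else 0)
        = (if pd n S ∧ n - 1 ∉ S ∧ n - 2 ∈ S then (-1 : ℤ) ^ S.card else 0) := by
    intro S hS
    have hsub := mem_powerset.1 hS
    have hnS : n ∉ S := fun h => hn' (hsub h)
    have hpd := pd_succ n hn S hsub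
    congr 1
    apply propext
    constructor
    · rintro ⟨h, -, h3⟩
      obtain ⟨hp, hd⟩ := hpd.1 h
      exact ⟨hp, h3, hd.resolve_left h3⟩
    · rintro ⟨h, h3, h4⟩
      exact ⟨hpd.2 ⟨h, Or.inr h4⟩, hnS, h3⟩
  rw [h2, add_zero, sum_congr rfl h1, B]

def α (n : ℕ) : ℤ := if n % 4 = 1 then -1 else if n % 4 = 3 then 1 else 0
def β (n : ℕ) : ℤ := if n % 4 = 2 then -1 else if n % 4 = 0 then 1 else 0
def γ (n : ℕ) : ℤ := -α n

lemma step_arith (m : ℕ) :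
    α (m + 1) = -(α m + β m + γ m) ∧ β (m + 1) = α m ∧ γ (m + 1) = β m := by
  have h : m % 4 = 0 ∨ m % 4 = 1 ∨ m % 4 = 2 ∨ m % 4 = 3 := by omega
  have h1 : (m + 1) % 4 = (m % 4 + 1) % 4 := by omega
  unfold γ α β
  rcases h with h | h | h | h <;> rw [h1, h] <;> norm_num

lemma final_arith (n : ℕ) (_hn : 1 ≤ n) : α n + β n = (-1 : ℤ) ^ ((n + 1) / 2) := by
  have h : n % 4 = 0 ∨ n % 4 = 1 ∨ n % 4 = 2 ∨ n % 4 = 3 := by omega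
  rcases h with h | h | h | h
  · have he : Even ((n + 1) / 2) := by rw [Nat.even_iff]; omega
    rw [he.neg_one_pow]; simp [α, β, h]
  · have he : Odd ((n + 1) / 2) := by rw [Nat.odd_iff]; omega
    rw [he.neg_one_pow]; simp [α, β, h]
  · have he : Odd ((n + 1) / 2) := by rw [Nat.odd_iff]; omega
    rw [he.neg_one_pow]; simp [α, β, h]
  · have he : Even ((n + 1) / 2) := by rw [Nat.even_iff]; omega
    rw [he.neg_one_pow]; simp [α, β, h]

lemma vals : ∀ k : ℕ, A (k + 1) = α (k + 1) ∧ B (k + 1) = β (k + 1) ∧ C (k + 1) = γ (k + 1) := by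
  intro k
  induction k with
  | zero => refine ⟨?_, ?_, ?_⟩ <;> decide
  | succ k ih =>
    obtain ⟨hA, hB, hC⟩ := ih
    obtain ⟨e1, e2, e3⟩ := step_arith (k + 1)
    refine ⟨?_, ?_, ?_⟩
    · rw [A_rec (k + 1) (by omega), hA, hB, hC]; exact e1.symm
    · rw [B_rec (k + 1) (by omega), hA]; exact e2.symm
    · rw [C_rec (k + 1) (by omega), hB]; exact e3.symm

lemma D_val (n : ℕ) (hn : 1 ≤ n) :
    (∑ S ∈ (range n).powerset, if domN n S then (-1 : ℤ) ^ S.card else 0)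
      = (-1 : ℤ) ^ ((n + 1) / 2) := by
  have hAB : (∑ S ∈ (range n).powerset, if domN n S then (-1 : ℤ) ^ S.card else 0)
      = A n + B n := by
    rw [A, B, ← sum_add_distrib]
    refine sum_congr rfl fun S hS => ?_
    have hsub := mem_powerset.1 hS
    have hd := domN_iff n hn S hsub
    by_cases h1 : pd n S
    · by_cases h2 : n - 1 ∈ S
      · simp [hd, h1, h2]
      · by_cases h3 : n - 2 ∈ S <;> simp [hd, h1, h2, h3]
    · simp [hd, h1]
  obtain ⟨k, rfl⟩ : ∃ k, n = k + 1 := ⟨n - 1, by omega⟩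
  obtain ⟨hA, hB, -⟩ := vals k
  rw [hAB, hA, hB, final_arith (k + 1) (by omega)]

lemma domN_image {n : ℕ} (S : Finset (Fin n)) :
    IsDomSet (pathGraph' n) S ↔ domN n (S.image Fin.val) := by
  constructor
  · intro h v hv
    rcases h ⟨v, hv⟩ with hm | ⟨u, hu, hadj⟩
    · exact Or.inl (mem_image_of_mem _ hm)
    · have hadj' : ((u.val : ℤ) - v).natAbs = 1 := hadj
      have : u.val = v + 1 ∨ v = u.val + 1 := by omega
      rcases this with h1 | h1
      · exact Or.inr (Or.inl (h1 ▸ mem_image_of_mem _ hu))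
      · refine Or.inr (Or.inr ?_)
        have : u.val = v - 1 := by omega
        exact this ▸ mem_image_of_mem _ hu
  · intro h v
    rcases h v.val v.isLt with h1 | h1 | h1
    · obtain ⟨u, hu, hue⟩ := mem_image.1 h1
      exact Or.inl ((Fin.val_injective hue : u = v) ▸ hu)
    · obtain ⟨u, hu, hue⟩ := mem_image.1 h1
      refine Or.inr ⟨u, hu, ?_⟩
      show ((u.val : ℤ) - v.val).natAbs = 1
      omega
    · obtain ⟨u, hu, hue⟩ := mem_image.1 h1
      by_cases h0 : v.val = 0
      · have : u = v := Fin.val_injective (by omega)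
        exact Or.inl (this ▸ hu)
      · refine Or.inr ⟨u, hu, ?_⟩
        show ((u.val : ℤ) - v.val).natAbs = 1
        omega

lemma image_filter (n : ℕ) (T : Finset ℕ) (hT : T ⊆ range n) :
    (univ.filter (fun i : Fin n => (i : ℕ) ∈ T)).image Fin.val = T := by
  ext m
  simp only [mem_image, mem_filter, mem_univ, true_and]
  constructor
  · rintro ⟨i, hi, rfl⟩; exact hi
  · intro hm; exact ⟨⟨m, mem_range.1 (hT hm)⟩, hm, rfl⟩

lemma filter_image {n : ℕ} (S : Finset (Fin n)) :
    univ.filter (fun i : Fin n => (i : ℕ) ∈ S.image Fin.val) = S := by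
  ext i
  simp only [mem_filter, mem_univ, true_and, mem_image]
  constructor
  · rintro ⟨j, hj, hji⟩; exact (Fin.val_injective hji : j = i) ▸ hj
  · intro hi; exact ⟨i, hi, rfl⟩

lemma bridge (n : ℕ) :
    ∑ S ∈ univ.filter (fun S : Finset (Fin n) => IsDomSet (pathGraph' n) S), (-1 : ℤ) ^ S.card
      = ∑ S ∈ (range n).powerset, if domN n S then (-1 : ℤ) ^ S.card else 0 := by
  rw [← sum_filter]
  refine sum_nbij' (fun S => S.image Fin.val)
    (fun T => univ.filter (fun i : Fin n => (i : ℕ) ∈ T)) ?_ ?_ ?_ ?_ ?_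
  · intro S hS
    rw [mem_filter] at hS ⊢
    refine ⟨mem_powerset.2 ?_, (domN_image S).1 hS.2⟩
    intro m hm
    obtain ⟨u, -, rfl⟩ := mem_image.1 hm
    exact mem_range.2 u.isLt
  · intro T hT
    rw [mem_filter] at hT ⊢
    refine ⟨mem_univ _, ?_⟩
    rw [domN_image, image_filter n T (mem_powerset.1 hT.1)]
    exact hT.2
  · intro S _; exact filter_image S
  · intro T hT; exact image_filter n T (mem_powerset.1 (mem_filter.1 hT).1)
  · intro S _
    rw [card_image_of_injective _ Fin.val_injective]

end PathDomAux

/-- For the path graph on `n ≥ 1` vertices, the number of dominating sets of even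
size minus the number of odd size equals `(-1)^⌈n/2⌉`. -/
theorem path_domination_poly_at_neg_one (n : ℕ) (hn : 1 ≤ n) :
    ((Finset.univ.filter (fun S => IsDomSet (pathGraph' n) S ∧ Even S.card)).card : ℤ) -
      ((Finset.univ.filter (fun S => IsDomSet (pathGraph' n) S ∧ Odd S.card)).card : ℤ) =
      (-1 : ℤ) ^ ((n + 1) / 2) := by
  classical
  have key := (PathDomAux.bridge n).trans (PathDomAux.D_val n hn)
  rw [← key, ← Finset.sum_filter_add_sum_filter_not
    (Finset.univ.filter (fun S : Finset (Fin n) => IsDomSet (pathGraph' n) S))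
    (fun S => Even S.card) (fun S => (-1 : ℤ) ^ S.card)]
  have hEf : (Finset.univ.filter (fun S : Finset (Fin n) => IsDomSet (pathGraph' n) S)).filter
      (fun S => Even S.card)
      = Finset.univ.filter (fun S => IsDomSet (pathGraph' n) S ∧ Even S.card) := by
    rw [Finset.filter_filter]
  have hOf : (Finset.univ.filter (fun S : Finset (Fin n) => IsDomSet (pathGraph' n) S)).filter
      (fun S => ¬ Even S.card)
      = Finset.univ.filter (fun S => IsDomSet (pathGraph' n) S ∧ Odd S.card) := by
    rw [Finset.filter_filter]
    ext S
    simp only [Finset.mem_filter, Nat.not_even_iff_odd]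
  rw [hEf, hOf]
  have e1 : ∑ S ∈ Finset.univ.filter
      (fun S => IsDomSet (pathGraph' n) S ∧ Even S.card), (-1 : ℤ) ^ S.card
      = ((Finset.univ.filter
        (fun S => IsDomSet (pathGraph' n) S ∧ Even S.card)).card : ℤ) := by
    rw [Finset.sum_congr rfl (fun S hS => Even.neg_one_pow (Finset.mem_filter.1 hS).2.2),
      Finset.sum_const, nsmul_eq_mul, mul_one]
  have e2 : ∑ S ∈ Finset.univ.filter
      (fun S => IsDomSet (pathGraph' n) S ∧ Odd S.card), (-1 : ℤ) ^ S.card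
      = -((Finset.univ.filter
        (fun S => IsDomSet (pathGraph' n) S ∧ Odd S.card)).card : ℤ) := by
    rw [Finset.sum_congr rfl (fun S hS => Odd.neg_one_pow (Finset.mem_filter.1 hS).2.2),
      Finset.sum_const, nsmul_eq_mul, mul_neg_one]
  rw [e1, e2]
  ring
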